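/- (Structure of the linear IFE space) Let K ⊂ ℝ³ be split by a plane Γ_h^K (with unit normal n̄ and orthonormal tangents t̄¹, t̄²) into K⁻ and K⁺, and let β⁻, β⁺ > 0. Define M⁻ = [t̄¹, t̄², β⁻ n̄]^{-T} [t̄¹, t̄², β⁺ n̄]^T. Then a piecewise-affine function v with v|_{K±} ∈ P₁(K±) satisfies [v] = 0 and [β ∇v · n̄] = 0 across Γ_h^K if and only if v(x) = p_h · (x − x_K) + c, where x_K ∈ Γ_h^K, c ∈ ℝ, and the piecewise-constant vector p_h satisfies p_h|_{K⁻} = M⁻ p_h|_{K⁺}. In particular ∇v⁻ = M⁻ ∇v⁺ and M⁺ := (M⁻)^{-1} exists. -/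

import Mathlib

open MeasureTheory
open scoped RealInnerProductSpace

/-- structure of the linear IFE space: let `K ⊆ ℝ³` be split by the
plane through `xK` with orthonormal frame `(t1, t2, n)` (normal `n`), coefficients
`β⁻, β⁺ > 0`, and `M⁻ = [t1, t2, β⁻ n]^{-T} [t1, t2, β⁺ n]^T`.  A piecewise affine
function with pieces `v± x = ⟪g±, x⟫ + c±` satisfies the jump conditions
`[v] = 0` across the plane and `[β ∇v · n] = 0` if and only if there are `c₀` and a
piecewise gradient with `∇v⁻ = M⁻ ∇v⁺` such that `v± x = ⟪g±, x − xK⟫ + c₀`.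
Moreover `M⁻` is invertible (so `M⁺ = (M⁻)⁻¹` exists). -/
theorem stmt18
    (t1 t2 n : EuclideanSpace ℝ (Fin 3))
    (h1 : ‖t1‖ = 1) (h2 : ‖t2‖ = 1) (hn : ‖n‖ = 1)
    (h12 : ⟪t1, t2⟫ = 0) (h1n : ⟪t1, n⟫ = 0) (h2n : ⟪t2, n⟫ = 0)
    (βm βp : ℝ) (hβm : 0 < βm) (hβp : 0 < βp)
    (xK : EuclideanSpace ℝ (Fin 3))
    (Mm : Matrix (Fin 3) (Fin 3) ℝ)
    (hMm : Mm = (Matrix.of fun i j => (![t1, t2, βm • n] i : EuclideanSpace ℝ (Fin 3)) j)⁻¹ *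
                (Matrix.of fun i j => (![t1, t2, βp • n] i : EuclideanSpace ℝ (Fin 3)) j))
    (gm gp : EuclideanSpace ℝ (Fin 3)) (cm cp : ℝ) :
    IsUnit Mm ∧
    (((∀ x : EuclideanSpace ℝ (Fin 3), ⟪n, x - xK⟫ = 0 → ⟪gm, x⟫ + cm = ⟪gp, x⟫ + cp) ∧
        βm * ⟪gm, n⟫ = βp * ⟪gp, n⟫)
      ↔ (∃ c0 : ℝ,
          (fun i => gm i) = Mm.mulVec (fun i => gp i) ∧
          (∀ x : EuclideanSpace ℝ (Fin 3), ⟪gm, x⟫ + cm = ⟪gm, x - xK⟫ + c0) ∧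
          (∀ x : EuclideanSpace ℝ (Fin 3), ⟪gp, x⟫ + cp = ⟪gp, x - xK⟫ + c0))) := by
  classical
  have hI : ∀ x y : EuclideanSpace ℝ (Fin 3), ⟪x, y⟫ = ∑ j, x j * y j := by
    intro x y; simp [PiLp.inner_apply, RCLike.inner_apply]; exact Finset.sum_congr rfl (fun _ _ => mul_comm _ _)
  set T : Matrix (Fin 3) (Fin 3) ℝ :=
    Matrix.of fun i j => (![t1, t2, n] i : EuclideanSpace ℝ (Fin 3)) j with hT
  set A : Matrix (Fin 3) (Fin 3) ℝ :=
    Matrix.of fun i j => (![t1, t2, βm • n] i : EuclideanSpace ℝ (Fin 3)) j with hA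
  set B : Matrix (Fin 3) (Fin 3) ℝ :=
    Matrix.of fun i j => (![t1, t2, βp • n] i : EuclideanSpace ℝ (Fin 3)) j with hB
  have h11 : ⟪t1, t1⟫ = 1 := by rw [real_inner_self_eq_norm_sq, h1]; norm_num
  have h22 : ⟪t2, t2⟫ = 1 := by rw [real_inner_self_eq_norm_sq, h2]; norm_num
  have hnn : ⟪n, n⟫ = 1 := by rw [real_inner_self_eq_norm_sq, hn]; norm_num
  have hTT : T * T.transpose = 1 := by
    ext i j
    have e11 := hI t1 t1; have e22 := hI t2 t2; have enn := hI n n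
    have e12 := hI t1 t2; have e1n := hI t1 n; have e2n := hI t2 n
    rw [h11] at e11; rw [h22] at e22; rw [hnn] at enn
    rw [h12] at e12; rw [h1n] at e1n; rw [h2n] at e2n
    rw [Fin.sum_univ_three] at e11 e22 enn e12 e1n e2n
    fin_cases i <;> fin_cases j <;>
      simp [T, Matrix.mul_apply, Matrix.one_apply, Fin.sum_univ_three] <;>
      first
        | linear_combination -e11 | linear_combination -e22 | linear_combination -enn
        | linear_combination -e12 | linear_combination -e1n | linear_combination -e2n
  have hTT' : T.transpose * T = 1 := mul_eq_one_comm.mp hTT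
  have hdetT : T.det * T.det = 1 := by
    have := congrArg Matrix.det hTT
    simpa [Matrix.det_mul, Matrix.det_transpose] using this
  have hdetTne : T.det ≠ 0 := by
    intro h; rw [h] at hdetT; simp at hdetT
  have hAD : A = Matrix.diagonal ![1, 1, βm] * T := by
    ext i j; fin_cases i <;> simp [A, T, Matrix.diagonal_mul]
  have hBD : B = Matrix.diagonal ![1, 1, βp] * T := by
    ext i j; fin_cases i <;> simp [B, T, Matrix.diagonal_mul]
  have hdetA : A.det = βm * T.det := by
    rw [hAD, Matrix.det_mul, Matrix.det_diagonal]
    simp [Fin.prod_univ_three]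
  have hdetB : B.det = βp * T.det := by
    rw [hBD, Matrix.det_mul, Matrix.det_diagonal]
    simp [Fin.prod_univ_three]
  have hAu : IsUnit A.det := by
    rw [hdetA]; exact (isUnit_iff_ne_zero).2 (mul_ne_zero hβm.ne' hdetTne)
  have hBu : IsUnit B.det := by
    rw [hdetB]; exact (isUnit_iff_ne_zero).2 (mul_ne_zero hβp.ne' hdetTne)
  have hMmAB : Mm = A⁻¹ * B := hMm
  have hMmUnit : IsUnit Mm := by
    rw [Matrix.isUnit_iff_isUnit_det, hMmAB, Matrix.det_mul, Matrix.det_nonsing_inv]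
    exact (isUnit_ringInverse.2 hAu).mul hBu
  refine ⟨hMmUnit, ?_⟩
  -- entry computations
  have hAgm : ∀ i, (A.mulVec (fun i => gm i)) i =
      ![⟪t1, gm⟫, ⟪t2, gm⟫, βm * ⟪n, gm⟫] i := by
    intro i
    fin_cases i <;>
      simp [A, Matrix.mulVec, dotProduct, hI, Finset.mul_sum, mul_assoc]
  have hBgp : ∀ i, (B.mulVec (fun i => gp i)) i =
      ![⟪t1, gp⟫, ⟪t2, gp⟫, βp * ⟪n, gp⟫] i := by
    intro i
    fin_cases i <;>
      simp [B, Matrix.mulVec, dotProduct, hI, Finset.mul_sum, mul_assoc]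
  have key : (fun i => gm i) = Mm.mulVec (fun i => gp i) ↔
      A.mulVec (fun i => gm i) = B.mulVec (fun i => gp i) := by
    constructor
    · intro h
      rw [h, hMmAB, Matrix.mulVec_mulVec, ← Matrix.mul_assoc,
        Matrix.mul_nonsing_inv A hAu, Matrix.one_mul]
    · intro h
      have : A⁻¹.mulVec (A.mulVec (fun i => gm i)) = A⁻¹.mulVec (B.mulVec (fun i => gp i)) := by
        rw [h]
      rwa [Matrix.mulVec_mulVec, Matrix.mulVec_mulVec, Matrix.nonsing_inv_mul A hAu,
        Matrix.one_mulVec, ← hMmAB] at this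
  constructor
  · rintro ⟨hplane, hflux⟩
    have hconst : ⟪gm, xK⟫ + cm = ⟪gp, xK⟫ + cp := by
      have := hplane xK (by simp)
      exact this
    have ht1 : ⟪t1, gm⟫ = ⟪t1, gp⟫ := by
      have h1' := hplane (xK + t1) (by
        rw [show xK + t1 - xK = t1 by abel]
        rw [real_inner_comm]; exact h1n)
      rw [inner_add_right, inner_add_right] at h1'
      have : ⟪gm, t1⟫ = ⟪gp, t1⟫ := by linarith
      rw [real_inner_comm gm t1, real_inner_comm gp t1]; exact this
    have ht2 : ⟪t2, gm⟫ = ⟪t2, gp⟫ := by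
      have h2' := hplane (xK + t2) (by
        rw [show xK + t2 - xK = t2 by abel]
        rw [real_inner_comm]; exact h2n)
      rw [inner_add_right, inner_add_right] at h2'
      have : ⟪gm, t2⟫ = ⟪gp, t2⟫ := by linarith
      rw [real_inner_comm gm t2, real_inner_comm gp t2]; exact this
    have hfn : βm * ⟪n, gm⟫ = βp * ⟪n, gp⟫ := by
      rw [real_inner_comm gm n, real_inner_comm gp n]; exact hflux
    refine ⟨⟪gm, xK⟫ + cm, ?_, ?_, ?_⟩
    · rw [key]
      funext i
      rw [hAgm, hBgp]
      fin_cases i <;> simp only [Matrix.cons_val_zero, Matrix.cons_val_one,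
        Matrix.head_cons, Fin.isValue, Matrix.cons_val_two, Matrix.tail_cons]
      · exact ht1
      · exact ht2
      · exact hfn
    · intro x; rw [inner_sub_right]; ring
    · intro x; rw [inner_sub_right]; linarith
  · rintro ⟨c0, hg, hm0, hp0⟩
    rw [key] at hg
    have hent : ∀ i, (![⟪t1, gm⟫, ⟪t2, gm⟫, βm * ⟪n, gm⟫] : Fin 3 → ℝ) i =
        ![⟪t1, gp⟫, ⟪t2, gp⟫, βp * ⟪n, gp⟫] i := by
      intro i; rw [← hAgm, ← hBgp, hg]
    have ht1 : ⟪t1, gm⟫ = ⟪t1, gp⟫ := hent 0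
    have ht2 : ⟪t2, gm⟫ = ⟪t2, gp⟫ := hent 1
    have hfn : βm * ⟪n, gm⟫ = βp * ⟪n, gp⟫ := hent 2
    constructor
    · intro x hx
      rw [hm0 x, hp0 x]
      have horth : ⟪gm, x - xK⟫ = ⟪gp, x - xK⟫ := by
        set w : EuclideanSpace ℝ (Fin 3) := x - xK with hw
        -- expand w in the orthonormal basis via Tᵀ T = 1
        have hdec : ∀ g : EuclideanSpace ℝ (Fin 3),
            ⟪g, w⟫ = ⟪t1, g⟫ * ⟪t1, w⟫ + ⟪t2, g⟫ * ⟪t2, w⟫ + ⟪n, g⟫ * ⟪n, w⟫ := by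
          intro g
          have hTw : (fun j => w j) = T.transpose.mulVec (T.mulVec (fun j => w j)) := by
            rw [Matrix.mulVec_mulVec, hTT', Matrix.one_mulVec]
          have : ⟪g, w⟫ = dotProduct (fun j => g j) (fun j => w j) := by
            rw [hI]; rfl
          rw [this, hTw, Matrix.dotProduct_mulVec]
          have hvm : ∀ i, Matrix.vecMul (fun j => g j) T.transpose i =
              ![⟪t1, g⟫, ⟪t2, g⟫, ⟪n, g⟫] i := by
            intro i
            fin_cases i <;>
              simp [T, Matrix.vecMul, dotProduct, hI, mul_comm]
          have hTv : ∀ i, T.mulVec (fun j => w j) i = ![⟪t1, w⟫, ⟪t2, w⟫, ⟪n, w⟫] i := by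
            intro i
            fin_cases i <;>
              simp [T, Matrix.mulVec, dotProduct, hI]
          rw [show (Matrix.vecMul (fun j => g j) T.transpose) = ![⟪t1, g⟫, ⟪t2, g⟫, ⟪n, g⟫]
            from funext hvm,
            show (T.mulVec (fun j => w j)) = ![⟪t1, w⟫, ⟪t2, w⟫, ⟪n, w⟫] from funext hTv]
          simp [dotProduct, Fin.sum_univ_three]
        rw [hdec gm, hdec gp, ht1, ht2, hx]
        have : ⟪n, gm⟫ * 0 = ⟪n, gp⟫ * 0 := by ring
        linarith [this]
      linarith [hm0 x, hp0 x, horth]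
    · rw [real_inner_comm n gm, real_inner_comm n gp]; exact hfn
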